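/- Let d ≥ 3 and k > 0. Define Φ(λ) = d·(1 - √(1 - 4(d-1)λ²k²))/(2(d-1)) for λ ∈ [0, 1/(2k√(d-1))]. Then sup{ λ ≥ 0 : Φ(λ) < 1 } = 1/(2k√(d-1)). Consequently the local survival critical parameter of the BRW on the homogeneous tree T_d with edge rates λk equals 1/(2k√(d-1)), which is strictly greater than the global critical parameter 1/(kd) whenever d ≥ 3. -/
import Mathlib


open Real

/-- On the homogeneous tree `T_d`, with `Φ(λ) = d(1-√(1-4(d-1)λ²k²))/(2(d-1))` defined for
`λ ∈ [0, 1/(2k√(d-1))]`, one has `sup{λ : Φ(λ) < 1} = 1/(2k√(d-1))`; this local critical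
parameter is strictly larger than the global one, `1/(kd)`. -/
theorem tree_local_critical (d : ℕ) (hd : 3 ≤ d) (k : ℝ) (hk : 0 < k) :
    sSup {l : ℝ | 0 ≤ l ∧ l ≤ 1 / (2 * k * Real.sqrt ((d : ℝ) - 1)) ∧
        (d : ℝ) * (1 - Real.sqrt (1 - 4 * ((d : ℝ) - 1) * l ^ 2 * k ^ 2)) /
          (2 * ((d : ℝ) - 1)) < 1}
      = 1 / (2 * k * Real.sqrt ((d : ℝ) - 1)) ∧
    1 / (k * (d : ℝ)) < 1 / (2 * k * Real.sqrt ((d : ℝ) - 1)) := by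
  have hd3 : (3:ℝ) ≤ (d:ℝ) := by exact_mod_cast hd
  have hd1 : (0:ℝ) < (d:ℝ) - 1 := by linarith
  have hs : 0 < Real.sqrt ((d:ℝ) - 1) := Real.sqrt_pos.mpr hd1
  have hsq : Real.sqrt ((d:ℝ) - 1) ^ 2 = (d:ℝ) - 1 := Real.sq_sqrt (le_of_lt hd1)
  set L := 1 / (2 * k * Real.sqrt ((d:ℝ) - 1)) with hL
  have hLpos : 0 < L := by positivity
  have key : 1 - 4 * ((d:ℝ) - 1) * L ^ 2 * k ^ 2 = 0 := by
    rw [hL]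
    field_simp
    nlinarith [hsq]
  have hmem : L ∈ {l : ℝ | 0 ≤ l ∧ l ≤ L ∧
      (d : ℝ) * (1 - Real.sqrt (1 - 4 * ((d : ℝ) - 1) * l ^ 2 * k ^ 2)) /
        (2 * ((d : ℝ) - 1)) < 1} := by
    refine ⟨le_of_lt hLpos, le_refl _, ?_⟩
    rw [key, Real.sqrt_zero]
    rw [div_lt_one (by linarith)]
    linarith
  have hub : ∀ x ∈ {l : ℝ | 0 ≤ l ∧ l ≤ L ∧
      (d : ℝ) * (1 - Real.sqrt (1 - 4 * ((d : ℝ) - 1) * l ^ 2 * k ^ 2)) /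
        (2 * ((d : ℝ) - 1)) < 1}, x ≤ L := fun x hx => hx.2.1
  constructor
  · exact le_antisymm (csSup_le ⟨L, hmem⟩ hub) (le_csSup ⟨L, hub⟩ hmem)
  · rw [hL, div_lt_div_iff₀ (by positivity) (by positivity)]
    have h2s : 2 * Real.sqrt ((d:ℝ) - 1) < (d:ℝ) := by
      nlinarith [hsq, hs.le]
    nlinarith [hs.le]
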